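/- Let r₁, r₂ > 0 and let z : [0,1] → ℝ be twice continuously differentiable with z(0) = 0 and z'(x) ≠ 0 for all x ∈ [0,1]. If ∫₀¹ 1/z'(x)² dx ≤ r₁ and (∫₀¹ (z(x)² + z'(x)² + z''(x)²) dx)^{1/2} ≤ r₂, then |z'(x)| ≥ (r₂/√2) · exp(−r₁ r₂²) for every x ∈ [0,1]. -/

import Mathlib

open Set MeasureTheory

lemma amgm_aux (c1 c2 a u : ℝ) (h1 : 0 < c1) (h2 : 0 < c2) (h12 : c1 * c2 = 1) :
    |2 * a * u| ≤ c1 * a^2 + c2 * u^2 := by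
  have hs : Real.sqrt c1 * Real.sqrt c2 = 1 := by
    rw [← Real.sqrt_mul h1.le, h12, Real.sqrt_one]
  have h1' := Real.sq_sqrt h1.le
  have h2' := Real.sq_sqrt h2.le
  have habs : |2 * a * u| = 2 * (|a| * |u|) := by
    rw [abs_mul, abs_mul]; simp [abs_of_nonneg]; ring
  rw [habs]
  nlinarith [sq_nonneg (Real.sqrt c1 * |a| - Real.sqrt c2 * |u|), sq_abs a, sq_abs u,
    abs_nonneg a, abs_nonneg u, Real.sqrt_nonneg c1, Real.sqrt_nonneg c2, hs,
    mul_nonneg (abs_nonneg a) (abs_nonneg u)]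

lemma elem_ineq (t : ℝ) : t / Real.sqrt 2 ≤ Real.exp (t^2 - t) := by
  have hw0 : (0:ℝ) < Real.sqrt 2 := Real.sqrt_pos.mpr (by norm_num)
  have hw2 : Real.sqrt 2 ^ 2 = 2 := Real.sq_sqrt (by norm_num)
  have hw32 : Real.sqrt 2 ≤ 3/2 := by nlinarith [hw0.le]
  have e1 : (t^2 - t) + 1 ≤ Real.exp (t^2 - t) := Real.add_one_le_exp _
  have e2 : t / Real.sqrt 2 ≤ (t^2 - t) + 1 := by
    rw [div_le_iff₀ hw0]
    nlinarith [sq_nonneg (2 * Real.sqrt 2 * t - Real.sqrt 2 - 1), hw0.le]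
  linarith

theorem strain_lower_bound (r₁ r₂ : ℝ) (hr₁ : 0 < r₁) (hr₂ : 0 < r₂)
    (z : ℝ → ℝ) (hz : ContDiff ℝ 2 z) (hz0 : z 0 = 0)
    (hz' : ∀ x ∈ Icc (0:ℝ) 1, deriv z x ≠ 0)
    (h1 : (∫ x in (0:ℝ)..1, 1 / (deriv z x)^2) ≤ r₁)
    (h2 : (∫ x in (0:ℝ)..1, ((z x)^2 + (deriv z x)^2 + (deriv (deriv z) x)^2)) ^ ((1:ℝ)/2)
      ≤ r₂) :
    ∀ x ∈ Icc (0:ℝ) 1, (r₂ / Real.sqrt 2) * Real.exp (-(r₁ * r₂^2)) ≤ |deriv z x| := by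
  intro x hx
  set z1 := deriv z with hz1def
  set z2 := deriv (deriv z) with hz2def
  -- regularity
  have h2' : ContDiff ℝ (1+1) z := by
    exact_mod_cast hz
  have hc1 : ContDiff ℝ 1 z1 := (contDiff_succ_iff_deriv.mp h2').2.2
  have hd1 : Differentiable ℝ z1 := hc1.differentiable one_ne_zero
  have hcz1 : Continuous z1 := hc1.continuous
  have hcz2 : Continuous z2 := hc1.continuous_deriv le_rfl
  have hcz : Continuous z := hz.continuous
  -- abbreviations
  set s := Real.sqrt r₁ with hsdef
  have hs0 : 0 < s := Real.sqrt_pos.mpr hr₁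
  have hs2 : s ^ 2 = r₁ := Real.sq_sqrt hr₁.le
  set A := s * r₂ with hAdef
  have hA0 : 0 < A := mul_pos hs0 hr₂
  have hA2 : A ^ 2 = r₁ * r₂ ^ 2 := by rw [hAdef, mul_pow, hs2]
  set c1 := s / r₂ with hc1def
  set c2 := r₂ / s with hc2def
  have hc1pos : 0 < c1 := div_pos hs0 hr₂
  have hc2pos : 0 < c2 := div_pos hr₂ hs0
  have hc12 : c1 * c2 = 1 := by rw [hc1def, hc2def]; field_simp
  -- integrability
  have hinvcont : ContinuousOn (fun t => 1 / z1 t ^ 2) (Icc (0:ℝ) 1) := by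
    exact continuousOn_const.div ((hcz1.pow 2).continuousOn)
      (fun t ht => pow_ne_zero 2 (hz' t ht))
  have hinvint : IntervalIntegrable (fun t => 1 / z1 t ^ 2) volume 0 1 :=
    hinvcont.intervalIntegrable_of_Icc zero_le_one
  have hz2sqint : IntervalIntegrable (fun t => z2 t ^ 2) volume 0 1 :=
    ((hcz2.pow 2)).intervalIntegrable 0 1
  have hSint : IntervalIntegrable (fun t => z t ^ 2 + z1 t ^ 2 + z2 t ^ 2) volume 0 1 :=
    (((hcz.pow 2).add (hcz1.pow 2)).add (hcz2.pow 2)).intervalIntegrable 0 1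
  have hhcont : ContinuousOn (fun t => 2 * z2 t / z1 t) (Icc (0:ℝ) 1) :=
    (continuous_const.mul hcz2).continuousOn.div hcz1.continuousOn (fun t ht => hz' t ht)
  have hhint : IntervalIntegrable (fun t => 2 * z2 t / z1 t) volume 0 1 :=
    hhcont.intervalIntegrable_of_Icc zero_le_one
  have hhabsint : IntervalIntegrable (fun t => |2 * z2 t / z1 t|) volume 0 1 :=
    hhcont.abs.intervalIntegrable_of_Icc zero_le_one
  -- max of z1^2 on [0,1]
  obtain ⟨y, hy, hymax⟩ := isCompact_Icc.exists_isMaxOn (nonempty_Icc.mpr zero_le_one)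
      ((hcz1.pow 2).continuousOn : ContinuousOn (fun t => z1 t ^ 2) (Icc (0:ℝ) 1))
  set M := z1 y ^ 2 with hMdef
  have hy0 : z1 y ≠ 0 := hz' y hy
  have hMpos : 0 < M := by positivity
  -- M ≥ 1/r₁
  have hMr : 1 / r₁ ≤ M := by
    have hmono : (∫ _t in (0:ℝ)..1, (1/M)) ≤ ∫ t in (0:ℝ)..1, 1 / z1 t ^ 2 := by
      apply intervalIntegral.integral_mono_on zero_le_one intervalIntegrable_const hinvint
      intro t ht
      have h0 : 0 < z1 t ^ 2 := by have := hz' t ht; positivity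
      exact one_div_le_one_div_of_le h0 (hymax ht)
    simp only [intervalIntegral.integral_const, smul_eq_mul, sub_zero, one_mul] at hmono
    have h1M : 1 / M ≤ r₁ := hmono.trans h1
    rw [div_le_iff₀ hMpos] at h1M
    rw [div_le_iff₀ hr₁]
    linarith [mul_comm M r₁]
  -- ∫ z2² ≤ r₂²
  have hSnn : ∀ t, (0:ℝ) ≤ z t ^ 2 + z1 t ^ 2 + z2 t ^ 2 := fun t => by positivity
  have hI0 : 0 ≤ ∫ t in (0:ℝ)..1, (z t ^ 2 + z1 t ^ 2 + z2 t ^ 2) :=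
    intervalIntegral.integral_nonneg zero_le_one (fun t _ => hSnn t)
  have hIle : (∫ t in (0:ℝ)..1, (z t ^ 2 + z1 t ^ 2 + z2 t ^ 2)) ≤ r₂ ^ 2 := by
    have hsqrt : Real.sqrt (∫ t in (0:ℝ)..1, (z t ^ 2 + z1 t ^ 2 + z2 t ^ 2)) ≤ r₂ := by
      rw [Real.sqrt_eq_rpow]; exact h2
    calc (∫ t in (0:ℝ)..1, (z t ^ 2 + z1 t ^ 2 + z2 t ^ 2))
        = Real.sqrt (∫ t in (0:ℝ)..1, (z t ^ 2 + z1 t ^ 2 + z2 t ^ 2)) ^ 2 :=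
          (Real.sq_sqrt hI0).symm
      _ ≤ r₂ ^ 2 := by
          apply pow_le_pow_left₀ (Real.sqrt_nonneg _) hsqrt
  have hz2le : (∫ t in (0:ℝ)..1, z2 t ^ 2) ≤ r₂ ^ 2 := by
    refine le_trans ?_ hIle
    apply intervalIntegral.integral_mono_on zero_le_one hz2sqint hSint
    intro t _; nlinarith [sq_nonneg (z t), sq_nonneg (z1 t)]
  -- integral of |2 z2 / z1| ≤ 2A
  have hinv_nonneg : (0:ℝ) ≤ ∫ t in (0:ℝ)..1, 1 / z1 t ^ 2 :=
    intervalIntegral.integral_nonneg zero_le_one (fun t _ => by positivity)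
  have hIh : (∫ t in (0:ℝ)..1, |2 * z2 t / z1 t|) ≤ 2 * A := by
    have hFint : IntervalIntegrable (fun t => c1 * z2 t ^ 2 + c2 * (1 / z1 t ^ 2)) volume 0 1 :=
      (hz2sqint.const_mul c1).add (hinvint.const_mul c2)
    have hstep : (∫ t in (0:ℝ)..1, |2 * z2 t / z1 t|)
        ≤ ∫ t in (0:ℝ)..1, (c1 * z2 t ^ 2 + c2 * (1 / z1 t ^ 2)) := by
      apply intervalIntegral.integral_mono_on zero_le_one hhabsint hFint
      intro t ht
      have h0 : z1 t ≠ 0 := hz' t ht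
      have key := amgm_aux c1 c2 (z2 t) (z1 t)⁻¹ hc1pos hc2pos hc12
      have e1 : 2 * z2 t / z1 t = 2 * z2 t * (z1 t)⁻¹ := div_eq_mul_inv _ _
      have e2 : c2 * ((z1 t)⁻¹) ^ 2 = c2 * (1 / z1 t ^ 2) := by rw [one_div, inv_pow]
      rw [e1, ← e2]
      exact key
    have hsplit : (∫ t in (0:ℝ)..1, (c1 * z2 t ^ 2 + c2 * (1 / z1 t ^ 2)))
        = c1 * (∫ t in (0:ℝ)..1, z2 t ^ 2) + c2 * (∫ t in (0:ℝ)..1, 1 / z1 t ^ 2) := by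
      rw [intervalIntegral.integral_add (hz2sqint.const_mul c1) (hinvint.const_mul c2),
        intervalIntegral.integral_const_mul, intervalIntegral.integral_const_mul]
    have hbound : c1 * (∫ t in (0:ℝ)..1, z2 t ^ 2) + c2 * (∫ t in (0:ℝ)..1, 1 / z1 t ^ 2)
        ≤ c1 * r₂ ^ 2 + c2 * r₁ :=
      add_le_add (mul_le_mul_of_nonneg_left hz2le hc1pos.le)
        (mul_le_mul_of_nonneg_left h1 hc2pos.le)
    have hval : c1 * r₂ ^ 2 + c2 * r₁ = 2 * A := by
      rw [hc1def, hc2def, hAdef]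
      field_simp
      nlinarith [hs2]
    rw [hsplit] at hstep
    linarith
  -- FTC for log(z1²)
  have hftc : ∀ a ∈ Icc (0:ℝ) 1, ∀ b ∈ Icc (0:ℝ) 1, a ≤ b →
      Real.log (z1 b ^ 2) - Real.log (z1 a ^ 2) = ∫ t in a..b, 2 * z2 t / z1 t := by
    intro a ha b hb hab
    have hsub : Icc a b ⊆ Icc (0:ℝ) 1 := Icc_subset_Icc ha.1 hb.2
    refine (intervalIntegral.integral_eq_sub_of_hasDerivAt
        (f := fun t => Real.log (z1 t ^ 2)) (f' := fun t => 2 * z2 t / z1 t) ?_ ?_).symm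
    · intro t ht
      rw [uIcc_of_le hab] at ht
      have h0 : z1 t ≠ 0 := hz' t (hsub ht)
      have hu : HasDerivAt (fun w => z1 w ^ 2) (2 * z1 t * z2 t) t := by
        have h := (hd1 t).hasDerivAt
        have := h.pow 2
        exact this.congr_deriv (by rw [show deriv z1 t = z2 t from rfl]; norm_num)
      have hl := hu.log (pow_ne_zero 2 h0)
      refine hl.congr_deriv ?_
      rw [div_eq_div_iff (pow_ne_zero 2 h0) h0]
      ring
    · exact (hhcont.mono hsub).intervalIntegrable_of_Icc hab
  -- |log(z1 x²) − log M| ≤ 2A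
  have hkey : |Real.log (z1 x ^ 2) - Real.log M| ≤ 2 * A := by
    have habs : ∀ a ∈ Icc (0:ℝ) 1, ∀ b ∈ Icc (0:ℝ) 1, a ≤ b →
        |Real.log (z1 b ^ 2) - Real.log (z1 a ^ 2)| ≤ 2 * A := by
      intro a ha b hb hab
      rw [hftc a ha b hb hab]
      calc |∫ t in a..b, 2 * z2 t / z1 t| ≤ ∫ t in a..b, |2 * z2 t / z1 t| :=
            intervalIntegral.abs_integral_le_integral_abs hab
        _ ≤ ∫ t in (0:ℝ)..1, |2 * z2 t / z1 t| := by
            apply intervalIntegral.integral_mono_interval ha.1 hab hb.2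
            · exact Filter.Eventually.of_forall (fun t => abs_nonneg _)
            · exact hhabsint
        _ ≤ 2 * A := hIh
    rcases le_total y x with hyx | hxy
    · exact habs y hy x hx hyx
    · rw [abs_sub_comm]; exact habs x hx y hy hxy
  -- lower bound on z1 x ^ 2
  have hx2pos : 0 < z1 x ^ 2 := by have := hz' x hx; positivity
  have hlog : Real.log (1 / r₁) - 2 * A ≤ Real.log (z1 x ^ 2) := by
    have h1' : Real.log M - 2 * A ≤ Real.log (z1 x ^ 2) := by
      have := abs_le.mp hkey
      linarith [this.1]
    have h2'' : Real.log (1 / r₁) ≤ Real.log M :=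
      Real.log_le_log (by positivity) hMr
    linarith
  have hz1xsq : (1 / r₁) * Real.exp (-(2 * A)) ≤ z1 x ^ 2 := by
    have h := Real.exp_le_exp.mpr hlog
    rw [Real.exp_sub, Real.exp_log (by positivity : (0:ℝ) < 1 / r₁),
      Real.exp_log hx2pos] at h
    rw [Real.exp_neg, ← div_eq_mul_inv]
    exact h
  have hb2 : (Real.exp (-A) / s) ^ 2 ≤ z1 x ^ 2 := by
    have he : Real.exp (-A) ^ 2 = Real.exp (-(2 * A)) := by
      rw [← Real.exp_nat_mul]; norm_num
    have heq : (Real.exp (-A) / s) ^ 2 = (1 / r₁) * Real.exp (-(2 * A)) := by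
      rw [div_pow, he, hs2]; ring
    rw [heq]; exact hz1xsq
  have hfin : Real.exp (-A) / s ≤ |z1 x| := by
    have h := Real.sqrt_le_sqrt hb2
    rwa [Real.sqrt_sq (by positivity : (0:ℝ) ≤ Real.exp (-A) / s),
      Real.sqrt_sq_eq_abs] at h
  have hcmp : (r₂ / Real.sqrt 2) * Real.exp (-(r₁ * r₂ ^ 2)) ≤ Real.exp (-A) / s := by
    have h3 : A / Real.sqrt 2 ≤ Real.exp (A ^ 2 - A) := elem_ineq A
    have h4 : (A / Real.sqrt 2) * Real.exp (-(A ^ 2))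
        ≤ Real.exp (A ^ 2 - A) * Real.exp (-(A ^ 2)) :=
      mul_le_mul_of_nonneg_right h3 (Real.exp_pos _).le
    have h5 : Real.exp (A ^ 2 - A) * Real.exp (-(A ^ 2)) = Real.exp (-A) := by
      rw [← Real.exp_add]; ring_nf
    rw [h5] at h4
    have hw0 : (0:ℝ) < Real.sqrt 2 := Real.sqrt_pos.mpr (by norm_num)
    have h6 : (r₂ / Real.sqrt 2) * Real.exp (-(r₁ * r₂ ^ 2))
        = ((A / Real.sqrt 2) * Real.exp (-(A ^ 2))) / s := by
      rw [← hA2, hAdef]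
      field_simp
    rw [h6]
    exact div_le_div_of_nonneg_right h4 hs0.le
  exact hcmp.trans hfin
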